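/- arXiv:1008.3470 — 2 statements merged into one kernel-verified Lean document; each statement's English description precedes it below -/
import Mathlib

section
/- Let G be a group acting 3-discontinuously and 2-cocompactly on a compactum T. Then G is finitely generated if and only if there exists a G-finite set A of entourages of T whose graph of entourages Γ_A is connected. -/
namespace RHG

/-- Triples with pairwise distinct components. -/
def distinct3 {X : Type*} : Set (X × X × X) :=
  {x | x.1 ≠ x.2.1 ∧ x.1 ≠ x.2.2 ∧ x.2.1 ≠ x.2.2}

/-- Pairs with distinct components. -/
def distinct2 {X : Type*} : Set (X × X) := {x | x.1 ≠ x.2}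

/-- The action `act` of `G` on `X` is 3-discontinuous: the induced action on the space of
(ordered) triples of pairwise distinct points is properly discontinuous. -/
def ThreeDisc {G X : Type*} [TopologicalSpace X] (act : G → X → X) : Prop :=
  ∀ K : Set (X × X × X), IsCompact K → K ⊆ distinct3 →
    Set.Finite {g : G |
      (((fun x : X × X × X => (act g x.1, act g x.2.1, act g x.2.2)) '' K) ∩ K).Nonempty}

/-- The action `act` of `G` on `X` is 2-cocompact: the action on the space of (ordered) pairs
of distinct points is cocompact. -/
def TwoCocompact {G X : Type*} [TopologicalSpace X] (act : G → X → X) : Prop :=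
  ∃ K : Set (X × X), IsCompact K ∧ K ⊆ distinct2 ∧
    ∀ x : X × X, x ∈ (distinct2 : Set (X × X)) → ∃ g : G, (act g x.1, act g x.2) ∈ K

/-- `ρ` is an action of the group `G` on `T` by homeomorphisms. -/
structure IsTopAction (G : Type*) [Group G] (T : Type*) [TopologicalSpace T]
    (ρ : G → T ≃ₜ T) : Prop where
  map_one : ρ 1 = Homeomorph.refl T
  map_mul : ∀ g h : G, ρ (g * h) = (ρ h).trans (ρ g)

/-- The stabilizer of a point for an action by homeomorphisms. -/
def actStab {G : Type*} [Group G] {T : Type*} [TopologicalSpace T]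
    (ρ : G → T ≃ₜ T) (hρ : IsTopAction G T ρ) (p : T) : Subgroup G where
  carrier := {g : G | ρ g p = p}
  one_mem' := by
    simp only [Set.mem_setOf_eq, hρ.map_one, Homeomorph.refl_apply, id_eq]
  mul_mem' := by
    intro a b ha hb
    simp only [Set.mem_setOf_eq] at *
    rw [hρ.map_mul, Homeomorph.trans_apply, hb, ha]
  inv_mem' := by
    intro a ha
    simp only [Set.mem_setOf_eq] at *
    have h1 : ρ (a⁻¹ * a) p = ρ a⁻¹ (ρ a p) := by
      rw [hρ.map_mul, Homeomorph.trans_apply]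
    rw [inv_mul_cancel, hρ.map_one, ha] at h1
    simpa using h1.symm

/-- A parabolic point: its stabilizer is infinite and it is the unique fixed point
of its stabilizer. -/
def IsParabolicPt {G : Type*} [Group G] {T : Type*} [TopologicalSpace T]
    (ρ : G → T ≃ₜ T) (hρ : IsTopAction G T ρ) (p : T) : Prop :=
  Set.Infinite ((actStab ρ hρ p : Set G)) ∧
    ∀ q : T, (∀ g ∈ actStab ρ hρ p, ρ g q = q) → q = p

/-- `T` contains at least three points. -/
def HasThreePts (T : Type*) : Prop := ∃ x y z : T, x ≠ y ∧ x ≠ z ∧ y ≠ z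

end RHG

namespace RHG

/-- An entourage of a topological space `T`: a symmetric neighborhood of the diagonal
in `T × T` (identified with a neighborhood of the diagonal in the symmetric square). -/
structure Entourage (T : Type*) [TopologicalSpace T] where
  carrier : Set (T × T)
  symm' : ∀ x y : T, (x, y) ∈ carrier → (y, x) ∈ carrier
  mem_nhds' : ∀ x : T, carrier ∈ nhds (x, x)

variable {T : Type*} [TopologicalSpace T]

/-- A set is `e`-small if its `Δ_e`-diameter is at most 1, i.e. any two of its points
form a pair belonging to `e`. -/
def eSmall (e : Entourage T) (s : Set T) : Prop :=
  ∀ x ∈ s, ∀ y ∈ s, (x, y) ∈ e.carrier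

/-- `Δ_e (x, y) ≤ k` for the maximal metric `Δ_e` with `Δ_e ≤ 1` on pairs of `e`:
there is a chain of length `k` from `x` to `y` with consecutive pairs in `e`. -/
def eDistLE (e : Entourage T) (k : ℕ) (x y : T) : Prop :=
  ∃ c : ℕ → T, c 0 = x ∧ c k = y ∧ ∀ i < k, (c i, c (i + 1)) ∈ e.carrier

/-- Two entourages are unlinked if `T` is the union of an `a`-small and a `b`-small set. -/
def EntUnlinked (a b : Entourage T) : Prop :=
  ∃ sa sb : Set T, eSmall a sa ∧ eSmall b sb ∧ sa ∪ sb = Set.univ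

/-- Two entourages are linked if they are not unlinked. -/
def EntLinked (a b : Entourage T) : Prop := ¬ EntUnlinked a b

/-- Standing convention on entourages: self-linked, and `Δ_e`-diameter of `T` greater
than `4`. -/
def GoodEnt (e : Entourage T) : Prop :=
  EntLinked e e ∧ ∃ x y : T, ¬ eDistLE e 4 x y

/-- The shadow `sh_a b`: the intersection of all `a`-small sets with `b`-small complement. -/
def shadow (a b : Entourage T) : Set T :=
  ⋂₀ {s : Set T | eSmall a s ∧ eSmall b sᶜ}

/-- The betweenness relation `a − b − c (k)`:
`a ⋈ b ⋈ c` and `Δ_b(sh_b a, sh_b c) > k`. -/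
def Btw (a b c : Entourage T) (k : ℕ) : Prop :=
  EntUnlinked a b ∧ EntUnlinked b c ∧
    ∀ x ∈ shadow b a, ∀ y ∈ shadow b c, ¬ eDistLE b k x y

/-- The betweenness relation `a − b − p (k)` for a point `p ∈ T`:
`a ⋈ b` and `Δ_b(sh_b a, b₀) > k` for every `b`-small neighborhood `b₀` of `p`. -/
def BtwP (a b : Entourage T) (p : T) (k : ℕ) : Prop :=
  EntUnlinked a b ∧
    ∀ s : Set T, eSmall b s → s ∈ nhds p → ∀ x ∈ shadow b a, ∀ y ∈ s, ¬ eDistLE b k x y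

/-- The betweenness relation `p − b − q (k)` for points `p, q ∈ T`:
`Δ_b(b₁, b₂) > k` for all `b`-small neighborhoods `b₁` of `p` and `b₂` of `q`. -/
def BtwPP (p : T) (b : Entourage T) (q : T) (k : ℕ) : Prop :=
  ∀ s₁ s₂ : Set T, eSmall b s₁ → s₁ ∈ nhds p → eSmall b s₂ → s₂ ∈ nhds q →
    ∀ x ∈ s₁, ∀ y ∈ s₂, ¬ eDistLE b k x y

/-- The image of an entourage under a homeomorphism of `T`. -/
def entMap (φ : T ≃ₜ T) (e : Entourage T) : Entourage T where
  carrier := (fun x : T × T => ((φ.symm x.1 : T), (φ.symm x.2 : T))) ⁻¹' e.carrier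
  symm' := fun x y h => e.symm' _ _ h
  mem_nhds' := fun x => by
    have hcont : Continuous fun x : T × T => ((φ.symm x.1 : T), (φ.symm x.2 : T)) :=
      (φ.symm.continuous.comp continuous_fst).prodMk (φ.symm.continuous.comp continuous_snd)
    exact hcont.continuousAt.preimage_mem_nhds (e.mem_nhds' (φ.symm x))

/-- The orbit of an entourage under an action of `G` on `T` by homeomorphisms. -/
def entOrbit {G : Type*} [Group G] (ρ : G → T ≃ₜ T) (a₀ : Entourage T) :
    Set (Entourage T) :=
  {e | ∃ g : G, e = entMap (ρ g) a₀}

/-- A set of entourages is discrete if every entourage is linked with only finitely many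
of its elements. -/
def DiscreteEnts (A : Set (Entourage T)) : Prop :=
  ∀ w : Entourage T, Set.Finite {a ∈ A | EntLinked a w}

/-- `d_A(a, b) ≤ n` in the graph of entourages: there is a walk of length `n` in `A`
from `a` to `b` with consecutive vertices linked. -/
def AdistLE (A : Set (Entourage T)) (n : ℕ) (a b : Entourage T) : Prop :=
  ∃ c : ℕ → Entourage T, c 0 = a ∧ c n = b ∧ (∀ i ≤ n, c i ∈ A) ∧
    ∀ i < n, EntLinked (c i) (c (i + 1))

/-- The `d`-neighborhood of a subset `S` inside the graph of entourages on `A`. -/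
def Anbhd (A : Set (Entourage T)) (d : ℕ) (S : Set (Entourage T)) : Set (Entourage T) :=
  {a ∈ A | ∃ b ∈ S, AdistLE A d a b}

/-- The horosphere `T_{A,k}(p)`: the entourages of `A` which are not separated
from `p` by any element of `A`. -/
def horosphere (A : Set (Entourage T)) (k : ℕ) (p : T) : Set (Entourage T) :=
  {e ∈ A | ¬ ∃ a ∈ A, BtwP e a p k}

/-- `Ψ_k(a,b) = {c ∈ A : a − c − b (k)}`. -/
def Psi (A : Set (Entourage T)) (k : ℕ) (a b : Entourage T) : Set (Entourage T) :=
  {c ∈ A | Btw a c b k}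

/-- The topology on `T̃ = T ⊔ A`, generated by the singletons of elements of `A` and
the convex hulls `õ = o ∪ {e ∈ A : oᶜ is e-small}` of open sets `o ⊆ T`. -/
def tildeTop (A : Set (Entourage T)) : TopologicalSpace (T ⊕ ↥A) :=
  TopologicalSpace.generateFrom
    ({s | ∃ e : ↥A, s = {Sum.inr e}} ∪
      {s | ∃ o : Set T, IsOpen o ∧
        s = Sum.inl '' o ∪ Sum.inr '' {e : ↥A | eSmall (↑e) oᶜ}})

/-- The set of accumulation points of a set `S` in a topological space. -/
def accPts {X : Type*} [TopologicalSpace X] (S : Set X) : Set X :=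
  {x | x ∈ closure (S \ {x})}

/-- The extension of the action of `G` on `T` to `T̃ = T ⊔ A`. -/
def tildeAct {G : Type*} [Group G] (ρ : G → T ≃ₜ T) (A : Set (Entourage T))
    (hinv : ∀ g : G, ∀ a ∈ A, entMap (ρ g) a ∈ A) (g : G) :
    T ⊕ ↥A → T ⊕ ↥A :=
  fun x => match x with
  | Sum.inl t => Sum.inl (ρ g t)
  | Sum.inr e => Sum.inr ⟨entMap (ρ g) ↑e, hinv g (↑e) e.2⟩

/-- The `m`-separation property for a set of entourages. -/
def Separates (A : Set (Entourage T)) (m : ℕ) : Prop :=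
  ∀ p q : T, p ≠ q → ∃ a ∈ A, BtwPP p a q m

/-- `A` generates the filter of entourages. -/
def GeneratesFilter (A : Set (Entourage T)) : Prop :=
  ∀ u : Entourage T, ∃ (n : ℕ) (f : Fin n → Entourage T),
    (∀ i, f i ∈ A) ∧ (⋂ i, (f i).carrier) ⊆ u.carrier

/-- `γ` restricted to the integer interval `[i, j]` is a `c`-quasigeodesic of the graph
of entourages on `A`. -/
def IsQGOn (A : Set (Entourage T)) (c : ℝ) (i j : ℕ) (γ : ℕ → Entourage T) : Prop :=
  ∀ s t : ℕ, i ≤ s → s ≤ j → i ≤ t → t ≤ j →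
    (∀ m : ℕ, AdistLE A m (γ s) (γ t) → (1 / c) * |(s : ℝ) - (t : ℝ)| - c < (m : ℝ)) ∧
    ∃ m : ℕ, AdistLE A m (γ s) (γ t) ∧ (m : ℝ) ≤ c * |(s : ℝ) - (t : ℝ)| + c

/-- `γ : [0, n] → A` is a `c`-quasigeodesic of the graph of entourages on `A`. -/
def IsQG (A : Set (Entourage T)) (c : ℝ) (n : ℕ) (γ : ℕ → Entourage T) : Prop :=
  (∀ i ≤ n, γ i ∈ A) ∧ IsQGOn A c 0 n γ

/-- `γ : [0, n] → A` is a curve (edge-path) in the graph of entourages on `A`. -/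
def IsCurve (A : Set (Entourage T)) (n : ℕ) (γ : ℕ → Entourage T) : Prop :=
  (∀ i ≤ n, γ i ∈ A) ∧ ∀ i < n, EntLinked (γ i) (γ (i + 1))

/-- `γ : [0, n] → A` is an `(l, c)`-tight curve (with horosphere parameter `k` and
neighborhood radius `r`): every subinterval of length at most `l` is a `c`-quasigeodesic,
and if more than `l` points of the image of a subinterval lie in the `r`-neighborhood of
a horosphere of a parabolic point, then the endpoints of the subinterval are at
`d_A`-distance greater than `l/c − c`. -/
def IsTight (A : Set (Entourage T)) (k l : ℕ) (c : ℝ) (r n : ℕ)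
    (γ : ℕ → Entourage T) : Prop :=
  IsCurve A n γ ∧
  (∀ i j : ℕ, i ≤ j → j ≤ n → j - i ≤ l → IsQGOn A c i j γ) ∧
  (∀ i j : ℕ, i ≤ j → j ≤ n → ∀ p : T, (horosphere A k p).Infinite →
    l < Set.ncard ((γ '' Set.Icc i j) ∩ Anbhd A r (horosphere A k p)) →
    ∀ m : ℕ, AdistLE A m (γ i) (γ j) → (l : ℝ) / c - c < (m : ℝ))

/-- The vertex `γ i` of the curve `γ` is `d`-horospherical (with constant `e`): `γ`
contains subsegments `[i₁, i]` and `[i, i₂]` of length greater than `e` lying in the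
`d`-neighborhood of the horosphere of a parabolic point. -/
def IsHoroVertex (A : Set (Entourage T)) (k d e n : ℕ) (γ : ℕ → Entourage T)
    (i : ℕ) : Prop :=
  ∃ (p : T) (i₁ i₂ : ℕ), (horosphere A k p).Infinite ∧ i₁ ≤ i ∧ i ≤ i₂ ∧ i₂ ≤ n ∧
    e < i - i₁ ∧ e < i₂ - i ∧
    ∀ m : ℕ, i₁ ≤ m → m ≤ i₂ → γ m ∈ Anbhd A d (horosphere A k p)

end RHG

set_option linter.unusedSectionVars false

namespace RHG

variable {T : Type*} [TopologicalSpace T]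

theorem Entourage.ext' {a b : Entourage T} (h : a.carrier = b.carrier) : a = b := by
  cases a; cases b; simp only at h; subst h; rfl

lemma mem_carrier_diag (e : Entourage T) (x : T) : (x, x) ∈ e.carrier :=
  mem_of_mem_nhds (e.mem_nhds' x)

lemma EntUnlinked.symm {a b : Entourage T} (h : EntUnlinked a b) : EntUnlinked b a := by
  obtain ⟨sa, sb, hsa, hsb, hu⟩ := h
  exact ⟨sb, sa, hsb, hsa, by rw [Set.union_comm]; exact hu⟩

lemma EntLinked.symm {a b : Entourage T} (h : EntLinked a b) : EntLinked b a :=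
  fun hu => h hu.symm

lemma entMap_mem {φ : T ≃ₜ T} {e : Entourage T} {x y : T} :
    (x, y) ∈ (entMap φ e).carrier ↔ (φ.symm x, φ.symm y) ∈ e.carrier := Iff.rfl

lemma entMap_mem_apply {φ : T ≃ₜ T} {e : Entourage T} {x y : T} :
    (φ x, φ y) ∈ (entMap φ e).carrier ↔ (x, y) ∈ e.carrier := by
  rw [entMap_mem, φ.symm_apply_apply, φ.symm_apply_apply]

lemma eSmall_entMap_image {φ : T ≃ₜ T} {e : Entourage T} {s : Set T} (h : eSmall e s) :
    eSmall (entMap φ e) (φ '' s) := by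
  rintro x ⟨u, hu, rfl⟩ y ⟨v, hv, rfl⟩
  rw [entMap_mem_apply]
  exact h u hu v hv

lemma entMap_trans (φ ψ : T ≃ₜ T) (e : Entourage T) :
    entMap φ (entMap ψ e) = entMap (ψ.trans φ) e := by
  apply Entourage.ext'
  rfl

lemma entMap_refl (e : Entourage T) : entMap (Homeomorph.refl T) e = e := by
  apply Entourage.ext'
  rfl

lemma entMap_symm_entMap (φ : T ≃ₜ T) (e : Entourage T) :
    entMap φ.symm (entMap φ e) = e := by
  rw [entMap_trans, Homeomorph.self_trans_symm, entMap_refl]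

lemma entMap_entMap_symm (φ : T ≃ₜ T) (e : Entourage T) :
    entMap φ (entMap φ.symm e) = e := by
  rw [entMap_trans, Homeomorph.symm_trans_self, entMap_refl]

lemma EntUnlinked.entMap {φ : T ≃ₜ T} {a b : Entourage T} (h : EntUnlinked a b) :
    EntUnlinked (entMap φ a) (entMap φ b) := by
  obtain ⟨sa, sb, hsa, hsb, hu⟩ := h
  refine ⟨φ '' sa, φ '' sb, eSmall_entMap_image hsa, eSmall_entMap_image hsb, ?_⟩
  rw [← Set.image_union, hu, Set.image_univ]
  exact φ.surjective.range_eq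

lemma entUnlinked_entMap_iff {φ : T ≃ₜ T} {a b : Entourage T} :
    EntUnlinked (entMap φ a) (entMap φ b) ↔ EntUnlinked a b := by
  constructor
  · intro h
    have := h.entMap (φ := φ.symm)
    rwa [entMap_symm_entMap, entMap_symm_entMap] at this
  · exact fun h => h.entMap

lemma entLinked_entMap_iff {φ : T ≃ₜ T} {a b : Entourage T} :
    EntLinked (entMap φ a) (entMap φ b) ↔ EntLinked a b :=
  not_congr entUnlinked_entMap_iff

lemma eDistLE.entMap {φ : T ≃ₜ T} {e : Entourage T} {k : ℕ} {x y : T}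
    (h : eDistLE e k x y) : eDistLE (entMap φ e) k (φ x) (φ y) := by
  obtain ⟨c, hc0, hck, hc⟩ := h
  refine ⟨fun i => φ (c i), by simp only [hc0], by simp only [hck], fun i hi => ?_⟩
  rw [entMap_mem_apply]
  exact hc i hi

lemma GoodEnt.entMap {φ : T ≃ₜ T} {e : Entourage T} (h : GoodEnt e) :
    GoodEnt (RHG.entMap φ e) := by
  obtain ⟨hl, x, y, hxy⟩ := h
  refine ⟨entLinked_entMap_iff.2 hl, φ x, φ y, fun hc => hxy ?_⟩
  have := hc.entMap (φ := φ.symm)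
  rwa [entMap_symm_entMap, φ.symm_apply_apply, φ.symm_apply_apply] at this

/-- The meet (intersection) of two entourages. -/
def entMeet (a b : Entourage T) : Entourage T where
  carrier := a.carrier ∩ b.carrier
  symm' := fun x y h => ⟨a.symm' x y h.1, b.symm' x y h.2⟩
  mem_nhds' := fun x => Filter.inter_mem (a.mem_nhds' x) (b.mem_nhds' x)

lemma eSmall_of_meet_left {a b : Entourage T} {s : Set T} (h : eSmall (entMeet a b) s) :
    eSmall a s := fun x hx y hy => (h x hx y hy).1

lemma eSmall_of_meet_right {a b : Entourage T} {s : Set T} (h : eSmall (entMeet a b) s) :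
    eSmall b s := fun x hx y hy => (h x hx y hy).2

lemma linked_meet_left {a b : Entourage T} (ha : EntLinked a a) :
    EntLinked (entMeet a b) a := by
  rintro ⟨sc, sa, hsc, hsa, hu⟩
  exact ha ⟨sc, sa, eSmall_of_meet_left hsc, hsa, hu⟩

lemma linked_meet_right {a b : Entourage T} (hb : EntLinked b b) :
    EntLinked (entMeet a b) b := by
  rintro ⟨sc, sb, hsc, hsb, hu⟩
  exact hb ⟨sc, sb, eSmall_of_meet_right hsc, hsb, hu⟩

lemma GoodEnt.meet {a b : Entourage T} (ha : GoodEnt a) : GoodEnt (entMeet a b) := by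
  obtain ⟨hl, x, y, hxy⟩ := ha
  refine ⟨?_, x, y, fun hc => hxy ?_⟩
  · rintro ⟨s1, s2, hs1, hs2, hu⟩
    exact hl ⟨s1, s2, eSmall_of_meet_left hs1, eSmall_of_meet_left hs2, hu⟩
  · obtain ⟨c, h0, hk, hc⟩ := hc
    exact ⟨c, h0, hk, fun i hi => (hc i hi).1⟩

lemma entMap_meet (φ : T ≃ₜ T) (a b : Entourage T) :
    RHG.entMap φ (entMeet a b) = entMeet (RHG.entMap φ a) (RHG.entMap φ b) := by
  apply Entourage.ext'
  rfl

end RHG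
namespace RHG

variable {T : Type*} [TopologicalSpace T]

lemma AdistLE.refl {A : Set (Entourage T)} {a : Entourage T} (ha : a ∈ A) :
    AdistLE A 0 a a :=
  ⟨fun _ => a, rfl, rfl, fun _ _ => ha, fun i hi => absurd hi (Nat.not_lt_zero i)⟩

lemma AdistLE.single {A : Set (Entourage T)} {a b : Entourage T} (ha : a ∈ A) (hb : b ∈ A)
    (hl : EntLinked a b) : AdistLE A 1 a b := by
  refine ⟨fun i => if i = 0 then a else b, by simp, by simp, fun i hi => ?_, fun i hi => ?_⟩
  · by_cases h : i = 0 <;> simp [h, ha, hb]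
  · interval_cases i
    simpa using hl

lemma AdistLE.symm {A : Set (Entourage T)} {n : ℕ} {a b : Entourage T}
    (h : AdistLE A n a b) : AdistLE A n b a := by
  obtain ⟨c, h0, hn, hmem, hl⟩ := h
  refine ⟨fun i => c (n - i), by simpa using hn, by simpa using h0,
    fun i hi => hmem _ (Nat.sub_le n i), fun i hi => ?_⟩
  have h1 : n - i = (n - (i + 1)) + 1 := by omega
  have := (hl (n - (i + 1)) (by omega)).symm
  rw [← h1] at this
  exact this

lemma AdistLE.trans {A : Set (Entourage T)} {m n : ℕ} {a b c : Entourage T}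
    (h1 : AdistLE A m a b) (h2 : AdistLE A n b c) : AdistLE A (m + n) a c := by
  obtain ⟨c1, h10, h1m, h1mem, h1l⟩ := h1
  obtain ⟨c2, h20, h2n, h2mem, h2l⟩ := h2
  refine ⟨fun i => if i ≤ m then c1 i else c2 (i - m), ?_, ?_, fun i hi => ?_, fun i hi => ?_⟩
  · simp [h10]
  · by_cases h : m + n ≤ m
    · have hn0 : n = 0 := by omega
      have hmn : m + n = m := by omega
      simp only [hmn, if_pos le_rfl]
      rw [h1m, ← h2n, hn0, h20]
    · simp only [if_neg h]
      have hmn : m + n - m = n := by omega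
      rw [hmn, h2n]
  · by_cases h : i ≤ m
    · simp only [if_pos h]; exact h1mem i h
    · simp only [if_neg h]; exact h2mem _ (by omega)
  · have key : ∀ j, m ≤ j → (if j ≤ m then c1 j else c2 (j - m)) = c2 (j - m) := by
      intro j hj
      by_cases h : j ≤ m
      · have : j = m := le_antisymm h hj
        subst this
        simp [h1m, ← h20]
    
      · simp [h]
    show EntLinked (if i ≤ m then c1 i else c2 (i - m))
      (if i + 1 ≤ m then c1 (i + 1) else c2 (i + 1 - m))
    by_cases h : i + 1 ≤ m
    · simp only [if_pos h, if_pos (Nat.le_of_succ_le h)]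
      exact h1l i (by omega)
    · rw [key (i+1) (by omega)]
      by_cases h' : i ≤ m
      · have him : i = m := by omega
        rw [if_pos h', him, h1m, ← h20]
        have h2 : m + 1 - m = 0 + 1 := by omega
        rw [h2]
        exact h2l 0 (by omega)
      · rw [if_neg h']
        have : i + 1 - m = (i - m) + 1 := by omega
        rw [this]
        exact h2l (i - m) (by omega)

lemma AdistLE.map {G : Type*} [Group G] {ρ : G → T ≃ₜ T}
    {A : Set (Entourage T)} (hinv : ∀ g : G, ∀ a ∈ A, entMap (ρ g) a ∈ A)
    {n : ℕ} {a b : Entourage T} (g : G) (h : AdistLE A n a b) :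
    AdistLE A n (entMap (ρ g) a) (entMap (ρ g) b) := by
  obtain ⟨c, h0, hn, hmem, hl⟩ := h
  refine ⟨fun i => entMap (ρ g) (c i), by simp only [h0], by simp only [hn],
    fun i hi => hinv g _ (hmem i hi), fun i hi => entLinked_entMap_iff.2 (hl i hi)⟩

lemma AdistLE.exists_trans {A : Set (Entourage T)} {a b c : Entourage T}
    (h1 : ∃ m, AdistLE A m a b) (h2 : ∃ n, AdistLE A n b c) : ∃ k, AdistLE A k a c := by
  obtain ⟨m, h1⟩ := h1; obtain ⟨n, h2⟩ := h2; exact ⟨m + n, h1.trans h2⟩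

end RHG
namespace RHG

variable {T : Type*} [TopologicalSpace T] [CompactSpace T] [T2Space T]

lemma pair_sep {x y : T} (h : x ≠ y) :
    ∃ U V : Set T, U ∈ nhds x ∧ V ∈ nhds y ∧ IsClosed U ∧ IsClosed V ∧ Disjoint U V := by
  obtain ⟨u, v, hu, hv, hxu, hyv, huv⟩ := t2_separation h
  obtain ⟨U, hU, hUc, hUu⟩ := exists_mem_nhds_isClosed_subset (hu.mem_nhds hxu)
  obtain ⟨V, hV, hVc, hVv⟩ := exists_mem_nhds_isClosed_subset (hv.mem_nhds hyv)
  exact ⟨U, V, hU, hV, hUc, hVc, huv.mono hUu hVv⟩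

lemma triple_sep {x y z : T} (hxy : x ≠ y) (hxz : x ≠ z) (hyz : y ≠ z) :
    ∃ U V W : Set T, U ∈ nhds x ∧ V ∈ nhds y ∧ W ∈ nhds z ∧
      IsClosed U ∧ IsClosed V ∧ IsClosed W ∧ Disjoint U V ∧ Disjoint U W ∧ Disjoint V W := by
  obtain ⟨U1, V1, hU1, hV1, hU1c, hV1c, h1⟩ := pair_sep hxy
  obtain ⟨U2, W2, hU2, hW2, hU2c, hW2c, h2⟩ := pair_sep hxz
  obtain ⟨V3, W3, hV3, hW3, hV3c, hW3c, h3⟩ := pair_sep hyz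
  refine ⟨U1 ∩ U2, V1 ∩ V3, W2 ∩ W3, Filter.inter_mem hU1 hU2, Filter.inter_mem hV1 hV3,
    Filter.inter_mem hW2 hW3, hU1c.inter hU2c, hV1c.inter hV3c, hW2c.inter hW3c, ?_, ?_, ?_⟩
  · exact (h1.mono Set.inter_subset_left Set.inter_subset_left)
  · exact (h2.mono Set.inter_subset_right Set.inter_subset_left)
  · exact (h3.mono Set.inter_subset_right Set.inter_subset_right)

lemma exists_chain {x : T} {W0 : Set T} (h0 : IsOpen W0) (hx : x ∈ W0) :
    ∃ Wf : ℕ → Set T, Wf 0 = W0 ∧ (∀ i, IsOpen (Wf i)) ∧ (∀ i, x ∈ Wf i) ∧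
      ∀ i, closure (Wf (i + 1)) ⊆ Wf i := by
  have step : ∀ p : {V : Set T // IsOpen V ∧ x ∈ V},
      ∃ q : {V : Set T // IsOpen V ∧ x ∈ V}, closure q.1 ⊆ p.1 := by
    rintro ⟨V, hV, hxV⟩
    obtain ⟨t, ht, htc, hts⟩ := exists_mem_nhds_isClosed_subset (hV.mem_nhds hxV)
    exact ⟨⟨interior t, isOpen_interior, mem_interior_iff_mem_nhds.2 ht⟩,
      (closure_minimal interior_subset htc).trans hts⟩
  choose F hF using step
  let seq : ℕ → {V : Set T // IsOpen V ∧ x ∈ V} := fun n => F^[n] ⟨W0, h0, hx⟩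
  refine ⟨fun n => (seq n).1, rfl, fun n => (seq n).2.1, fun n => (seq n).2.2, fun n => ?_⟩
  show closure (seq (n + 1)).1 ⊆ (seq n).1
  have : seq (n + 1) = F (seq n) := Function.iterate_succ_apply' F n _
  rw [this]
  exact hF (seq n)

set_option maxHeartbeats 1000000 in
lemma exists_goodEnt (h3 : HasThreePts T) : ∃ e : Entourage T, GoodEnt e := by
  obtain ⟨x, y, z, hxy, hxz, hyz⟩ := h3
  obtain ⟨U, V, W, hU, hV, hW, hUc, hVc, hWc, hUV, hUW, hVW⟩ := triple_sep hxy hxz hyz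
  have hxU : x ∈ U := mem_of_mem_nhds hU
  have hyV : y ∈ V := mem_of_mem_nhds hV
  have hzW : z ∈ W := mem_of_mem_nhds hW
  obtain ⟨Wf, hWf0, hWfo, hWfx, hWfs⟩ :=
    exists_chain (isOpen_interior (s := U)) (mem_interior_iff_mem_nhds.2 hU)
  set bad : Set (T × T) :=
    (U ×ˢ V) ∪ (V ×ˢ U) ∪ (U ×ˢ W) ∪ (W ×ˢ U) ∪ (V ×ˢ W) ∪ (W ×ˢ V) ∪
      ⋃ i : Fin 5, ((closure (Wf (i + 1)) ×ˢ (Wf i)ᶜ) ∪ ((Wf i)ᶜ ×ˢ closure (Wf (i + 1))))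
    with hbad
  have hbadc : IsClosed bad := by
    refine (((((((hUc.prod hVc).union (hVc.prod hUc)).union (hUc.prod hWc)).union
      (hWc.prod hUc)).union (hVc.prod hWc)).union (hWc.prod hVc)).union ?_)
    exact isClosed_iUnion_of_finite fun i =>
      ((isClosed_closure.prod (hWfo i).isClosed_compl).union
        ((hWfo i).isClosed_compl.prod isClosed_closure))
  have hdiag : ∀ t : T, (t, t) ∉ bad := by
    intro t ht
    simp only [hbad, Set.mem_union, Set.mem_prod, Set.mem_iUnion, Set.mem_compl_iff] at ht
    rcases ht with ((((((⟨h1, h2⟩ | ⟨h1, h2⟩) | ⟨h1, h2⟩) | ⟨h1, h2⟩) | ⟨h1, h2⟩) | ⟨h1, h2⟩) |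
      ⟨i, (⟨h1, h2⟩ | ⟨h1, h2⟩)⟩)
    · exact Set.disjoint_left.1 hUV h1 h2
    · exact Set.disjoint_left.1 hUV h2 h1
    · exact Set.disjoint_left.1 hUW h1 h2
    · exact Set.disjoint_left.1 hUW h2 h1
    · exact Set.disjoint_left.1 hVW h1 h2
    · exact Set.disjoint_left.1 hVW h2 h1
    · exact h2 (hWfs i h1)
    · exact h1 (hWfs i h2)
  have hsym0 : ∀ u v : T, (u, v) ∈ bad → (v, u) ∈ bad := by
    intro u v h
    rw [hbad] at h ⊢
    rcases h with ((((((⟨h1, h2⟩ | ⟨h1, h2⟩) | ⟨h1, h2⟩) | ⟨h1, h2⟩) | ⟨h1, h2⟩) | ⟨h1, h2⟩) | h)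
    · exact Or.inl (Or.inl (Or.inl (Or.inl (Or.inl (Or.inr ⟨h2, h1⟩)))))
    · exact Or.inl (Or.inl (Or.inl (Or.inl (Or.inl (Or.inl ⟨h2, h1⟩)))))
    · exact Or.inl (Or.inl (Or.inl (Or.inr ⟨h2, h1⟩)))
    · exact Or.inl (Or.inl (Or.inl (Or.inl (Or.inr ⟨h2, h1⟩))))
    · exact Or.inl (Or.inr ⟨h2, h1⟩)
    · exact Or.inl (Or.inl (Or.inr ⟨h2, h1⟩))
    · rcases Set.mem_iUnion.1 h with ⟨i, hi | hi⟩
      · exact Or.inr (Set.mem_iUnion.2 ⟨i, Or.inr ⟨hi.2, hi.1⟩⟩)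
      · exact Or.inr (Set.mem_iUnion.2 ⟨i, Or.inl ⟨hi.2, hi.1⟩⟩)
  have hsymm : ∀ u v : T, (u, v) ∈ badᶜ → (v, u) ∈ badᶜ :=
    fun u v huv hvu => huv (hsym0 v u hvu)
  set e : Entourage T := ⟨badᶜ, hsymm, fun t => hbadc.isOpen_compl.mem_nhds (hdiag t)⟩ with he
  have hkey : ∀ j : ℕ, j < 5 → ∀ u v : T, u ∈ Wf (j + 1) → (u, v) ∈ e.carrier → v ∈ Wf j := by
    intro j hj u v hu huv
    by_contra hv
    apply huv
    rw [hbad]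
    refine Or.inr (Set.mem_iUnion.2 ⟨⟨j, hj⟩, Or.inl ⟨subset_closure hu, hv⟩⟩)
  refine ⟨e, ?_, x, y, ?_⟩
  · rintro ⟨s1, s2, hs1, hs2, hu⟩
    have hmem : ∀ t : T, t ∈ s1 ∪ s2 := fun t => hu ▸ Set.mem_univ t
    have hxyb : (x, y) ∈ bad := by
      rw [hbad]; exact Or.inl (Or.inl (Or.inl (Or.inl (Or.inl (Or.inl ⟨hxU, hyV⟩)))))
    have hxzb : (x, z) ∈ bad := by
      rw [hbad]; exact Or.inl (Or.inl (Or.inl (Or.inl (Or.inr ⟨hxU, hzW⟩))))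
    have hyzb : (y, z) ∈ bad := by
      rw [hbad]; exact Or.inl (Or.inl (Or.inr ⟨hyV, hzW⟩))
    have H1 : ¬(x ∈ s1 ∧ y ∈ s1) := fun ⟨h1, h2⟩ => hs1 x h1 y h2 hxyb
    have H2 : ¬(x ∈ s1 ∧ z ∈ s1) := fun ⟨h1, h2⟩ => hs1 x h1 z h2 hxzb
    have H3 : ¬(y ∈ s1 ∧ z ∈ s1) := fun ⟨h1, h2⟩ => hs1 y h1 z h2 hyzb
    have H4 : ¬(x ∈ s2 ∧ y ∈ s2) := fun ⟨h1, h2⟩ => hs2 x h1 y h2 hxyb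
    have H5 : ¬(x ∈ s2 ∧ z ∈ s2) := fun ⟨h1, h2⟩ => hs2 x h1 z h2 hxzb
    have H6 : ¬(y ∈ s2 ∧ z ∈ s2) := fun ⟨h1, h2⟩ => hs2 y h1 z h2 hyzb
    rcases hmem x with hx1 | hx2
    · rcases hmem y with hy1 | hy2
      · exact H1 ⟨hx1, hy1⟩
      · rcases hmem z with hz1 | hz2
        · exact H2 ⟨hx1, hz1⟩
        · exact H6 ⟨hy2, hz2⟩
    · rcases hmem y with hy1 | hy2
      · rcases hmem z with hz1 | hz2
        · exact H3 ⟨hy1, hz1⟩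
        · exact H5 ⟨hx2, hz2⟩
      · exact H4 ⟨hx2, hy2⟩
  · rintro ⟨c, h0, h4, hc⟩
    have k1 : c 1 ∈ Wf 4 := hkey 4 (by omega) _ _ (by rw [h0]; exact hWfx 5) (hc 0 (by omega))
    have k2 : c 2 ∈ Wf 3 := hkey 3 (by omega) _ _ k1 (hc 1 (by omega))
    have k3 : c 3 ∈ Wf 2 := hkey 2 (by omega) _ _ k2 (hc 2 (by omega))
    have k4 : c 4 ∈ Wf 1 := hkey 1 (by omega) _ _ k3 (hc 3 (by omega))
    rw [h4] at k4
    have : y ∈ U := interior_subset (hWf0 ▸ hWfs 0 (subset_closure k4))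
    exact Set.disjoint_left.1 hUV this hyV

end RHG
namespace RHG

variable {T : Type*} [TopologicalSpace T] {G : Type*} [Group G]

lemma entMap_mul {ρ : G → T ≃ₜ T} (hρ : IsTopAction G T ρ) (g h : G) (e : Entourage T) :
    entMap (ρ g) (entMap (ρ h) e) = entMap (ρ (g * h)) e := by
  rw [entMap_trans, ← hρ.map_mul]

lemma entMap_one {ρ : G → T ≃ₜ T} (hρ : IsTopAction G T ρ) (e : Entourage T) :
    entMap (ρ 1) e = e := by
  rw [hρ.map_one, entMap_refl]

lemma forward_dir [CompactSpace T] [T2Space T] (h3 : HasThreePts T)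
    (ρ : G → T ≃ₜ T) (hρ : IsTopAction G T ρ) (hFG : Group.FG G) :
    ∃ A : Set (Entourage T), A.Nonempty ∧
      (∀ a ∈ A, GoodEnt a) ∧
      (∀ g : G, ∀ a ∈ A, entMap (ρ g) a ∈ A) ∧
      (∃ F : Set (Entourage T), F.Finite ∧ F ⊆ A ∧
        ∀ a ∈ A, ∃ g : G, ∃ b ∈ F, a = entMap (ρ g) b) ∧
      (∀ a ∈ A, ∀ b ∈ A, ∃ n : ℕ, AdistLE A n a b) := by
  obtain ⟨a₀, ha₀⟩ := exists_goodEnt h3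
  obtain ⟨S, hScl, hSfin⟩ := Group.fg_iff.1 hFG
  set F : Set (Entourage T) :=
    insert a₀ ((fun s => entMeet a₀ (entMap (ρ s) a₀)) '' S) with hF
  set A : Set (Entourage T) := {e | ∃ g : G, ∃ b ∈ F, e = entMap (ρ g) b} with hA
  have hFgood : ∀ b ∈ F, GoodEnt b := by
    rintro b (rfl | ⟨s, hs, rfl⟩)
    · exact ha₀
    · exact ha₀.meet
  have hFA : F ⊆ A := fun b hb => ⟨1, b, hb, (entMap_one hρ b).symm⟩
  have ha₀A : a₀ ∈ A := hFA (Set.mem_insert _ _)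
  have hgood : ∀ a ∈ A, GoodEnt a := by
    rintro a ⟨g, b, hb, rfl⟩
    exact (hFgood b hb).entMap
  have hinv : ∀ g : G, ∀ a ∈ A, entMap (ρ g) a ∈ A := by
    rintro g a ⟨g', b, hb, rfl⟩
    exact ⟨g * g', b, hb, entMap_mul hρ g g' b⟩
  have horb : ∀ g : G, entMap (ρ g) a₀ ∈ A := fun g => hinv g a₀ ha₀A
  -- the subgroup of elements connected to the identity
  have hQone : ∃ n, AdistLE A n a₀ (entMap (ρ (1 : G)) a₀) :=
    ⟨0, by rw [entMap_one hρ]; exact AdistLE.refl ha₀A⟩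
  have hQmul : ∀ g h : G, (∃ n, AdistLE A n a₀ (entMap (ρ g) a₀)) →
      (∃ n, AdistLE A n a₀ (entMap (ρ h) a₀)) →
      ∃ n, AdistLE A n a₀ (entMap (ρ (g * h)) a₀) := by
    rintro g h ⟨m, hm⟩ ⟨n, hn⟩
    have h2 := hn.map hinv g
    rw [entMap_mul hρ] at h2
    exact ⟨m + n, hm.trans h2⟩
  have hQinv : ∀ g : G, (∃ n, AdistLE A n a₀ (entMap (ρ g) a₀)) →
      ∃ n, AdistLE A n a₀ (entMap (ρ g⁻¹) a₀) := by
    rintro g ⟨n, hn⟩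
    have h2 := hn.symm.map hinv g⁻¹
    rw [entMap_mul hρ, inv_mul_cancel, entMap_one hρ] at h2
    exact ⟨n, h2⟩
  let Q : Subgroup G :=
    { carrier := {g | ∃ n, AdistLE A n a₀ (entMap (ρ g) a₀)}
      one_mem' := hQone
      mul_mem' := fun {g h} hg hh => hQmul g h hg hh
      inv_mem' := fun {g} hg => hQinv g hg }
  have hSQ : S ⊆ ↑Q := by
    intro s hs
    have hmF : entMeet a₀ (entMap (ρ s) a₀) ∈ F := Set.mem_insert_iff.2 (Or.inr ⟨s, hs, rfl⟩)
    have hmA : entMeet a₀ (entMap (ρ s) a₀) ∈ A := hFA hmF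
    have hsA : entMap (ρ s) a₀ ∈ A := horb s
    have e1 : AdistLE A 1 a₀ (entMeet a₀ (entMap (ρ s) a₀)) :=
      AdistLE.single ha₀A hmA (linked_meet_left ha₀.1).symm
    have e2 : AdistLE A 1 (entMeet a₀ (entMap (ρ s) a₀)) (entMap (ρ s) a₀) :=
      AdistLE.single hmA hsA (linked_meet_right (ha₀.entMap (φ := ρ s)).1)
    exact ⟨2, e1.trans e2⟩
  have hQtop : ∀ g : G, g ∈ Q := by
    have hle : (⊤ : Subgroup G) ≤ Q := hScl ▸ (Subgroup.closure_le Q).2 hSQ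
    exact fun g => hle trivial
  have hconn0 : ∀ a ∈ A, ∃ g : G, ∃ n, AdistLE A n a (entMap (ρ g) a₀) := by
    rintro a ⟨g, b, hb, rfl⟩
    rcases hb with rfl | ⟨s, hs, rfl⟩
    · exact ⟨g, 0, AdistLE.refl (horb g)⟩
    · refine ⟨g * s, 1, ?_⟩
      have hl : EntLinked (entMap (ρ g) (entMeet a₀ (entMap (ρ s) a₀)))
          (entMap (ρ g) (entMap (ρ s) a₀)) :=
        entLinked_entMap_iff.2 (linked_meet_right (ha₀.entMap (φ := ρ s)).1)
      have := AdistLE.single (hinv g _ (hFA (Set.mem_insert_iff.2 (Or.inr ⟨s, hs, rfl⟩))))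
        (hinv g _ (horb s)) hl
      rw [entMap_mul hρ] at this
      exact this
  refine ⟨A, ⟨a₀, ha₀A⟩, hgood, hinv, ⟨F, ?_, hFA, fun a ha => ha⟩, ?_⟩
  · exact (hSfin.image _).insert a₀
  · intro a ha b hb
    obtain ⟨g, n1, hp1⟩ := hconn0 a ha
    obtain ⟨g', n2, hp2⟩ := hconn0 b hb
    obtain ⟨m1, hq1⟩ := hQtop g
    obtain ⟨m2, hq2⟩ := hQtop g'
    exact AdistLE.exists_trans ⟨n1, hp1⟩
      (AdistLE.exists_trans ⟨m1, hq1.symm⟩ (AdistLE.exists_trans ⟨m2, hq2⟩ ⟨n2, hp2.symm⟩))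

end RHG
namespace RHG

open Filter Set

variable {T : Type*} [TopologicalSpace T] {G : Type*} [Group G]

lemma act_apply_inv_apply {ρ : G → T ≃ₜ T} (hρ : IsTopAction G T ρ) (g : G) (t : T) :
    ρ g (ρ g⁻¹ t) = t := by
  have h2 : ρ (g * g⁻¹) t = ρ g (ρ g⁻¹ t) := by
    rw [hρ.map_mul]; rfl
  rw [mul_inv_cancel, hρ.map_one] at h2
  exact h2.symm

lemma exists_third (h3 : HasThreePts T) (a b : T) : ∃ u : T, u ≠ a ∧ u ≠ b := by
  obtain ⟨p, q, w, hpq, hpw, hqw⟩ := h3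
  by_contra hcon
  push_neg at hcon
  have key : ∀ u : T, u = a ∨ u = b := fun u => by
    rcases eq_or_ne u a with h | h
    · exact Or.inl h
    · exact Or.inr (hcon u h)
  rcases key p with hp | hp <;> rcases key q with hq | hq <;> rcases key w with hw | hw <;>
    first
      | exact hpq (hp.trans hq.symm)
      | exact hpw (hp.trans hw.symm)
      | exact hqw (hq.trans hw.symm)

section Reverse

variable [CompactSpace T] [T2Space T]

lemma exists_ulim {I : Type*} (𝒰 : Ultrafilter I) (f : I → T) :
    ∃ x : T, Filter.Tendsto f ↑𝒰 (nhds x) := by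
  obtain ⟨x, -, hx⟩ := isCompact_univ.ultrafilter_le_nhds (𝒰.map f) (by simp)
  refine ⟨x, ?_⟩
  rwa [Filter.Tendsto, ← Ultrafilter.coe_map]

lemma exists_small_nhd (e : Entourage T) (t : T) :
    ∃ V : Set T, IsOpen V ∧ t ∈ V ∧ eSmall e V := by
  obtain ⟨u, hu, v, hv, huv⟩ := mem_nhds_prod_iff.1 (e.mem_nhds' t)
  refine ⟨interior u ∩ interior v, isOpen_interior.inter isOpen_interior,
    ⟨mem_interior_iff_mem_nhds.2 hu, mem_interior_iff_mem_nhds.2 hv⟩, ?_⟩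
  intro p hp q hq
  exact huv ⟨interior_subset hp.1, interior_subset hq.2⟩

lemma three_disc_contra {I : Type*} (𝒰 : Ultrafilter I)
    (hUfin : ∀ s : Set I, s.Finite → s ∉ 𝒰)
    (ρ : G → T ≃ₜ T)
    (h3d : ThreeDisc fun (g : G) (x : T) => ρ g x)
    (σ : I → G) (hσ : Function.Injective σ)
    (x y z : I → T) (ξ ζ η ξ' ζ' η' : T)
    (hx : Tendsto x ↑𝒰 (nhds ξ)) (hy : Tendsto y ↑𝒰 (nhds ζ))
    (hz : Tendsto z ↑𝒰 (nhds η))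
    (hx' : Tendsto (fun i => ρ (σ i) (x i)) ↑𝒰 (nhds ξ'))
    (hy' : Tendsto (fun i => ρ (σ i) (y i)) ↑𝒰 (nhds ζ'))
    (hz' : Tendsto (fun i => ρ (σ i) (z i)) ↑𝒰 (nhds η'))
    (h1 : ξ ≠ ζ) (h2 : ξ ≠ η) (h3 : ζ ≠ η)
    (h1' : ξ' ≠ ζ') (h2' : ξ' ≠ η') (h3' : ζ' ≠ η') : False := by
  obtain ⟨U, V, W, hUn, hVn, hWn, hUc, hVc, hWc, hUV, hUW, hVW⟩ := triple_sep h1 h2 h3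
  obtain ⟨U', V', W', hUn', hVn', hWn', hUc', hVc', hWc', hUV', hUW', hVW'⟩ :=
    triple_sep h1' h2' h3'
  set K : Set (T × T × T) := (U ×ˢ V ×ˢ W) ∪ (U' ×ˢ V' ×ˢ W') with hK
  have hKcpt : IsCompact K :=
    ((hUc.prod (hVc.prod hWc)).union (hUc'.prod (hVc'.prod hWc'))).isCompact
  have hK3 : K ⊆ distinct3 := by
    rintro ⟨p, q, w⟩ (⟨hp, hq, hw⟩ | ⟨hp, hq, hw⟩)
    · exact ⟨fun h => Set.disjoint_left.1 hUV (h ▸ hp) hq,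
        fun h => Set.disjoint_left.1 hUW (h ▸ hp) hw,
        fun h => Set.disjoint_left.1 hVW (h ▸ hq) hw⟩
    · exact ⟨fun h => Set.disjoint_left.1 hUV' (h ▸ hp) hq,
        fun h => Set.disjoint_left.1 hUW' (h ▸ hp) hw,
        fun h => Set.disjoint_left.1 hVW' (h ▸ hq) hw⟩
  have hfin := h3d K hKcpt hK3
  have hmem : ∀ᶠ i in ↑𝒰, x i ∈ U ∧ y i ∈ V ∧ z i ∈ W ∧
      ρ (σ i) (x i) ∈ U' ∧ ρ (σ i) (y i) ∈ V' ∧ ρ (σ i) (z i) ∈ W' := by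
    filter_upwards [hx hUn, hy hVn, hz hWn, hx' hUn', hy' hVn', hz' hWn'] with
      i e1 e2 e3 e4 e5 e6
    exact ⟨e1, e2, e3, e4, e5, e6⟩
  have hsub : {i : I | x i ∈ U ∧ y i ∈ V ∧ z i ∈ W ∧
      ρ (σ i) (x i) ∈ U' ∧ ρ (σ i) (y i) ∈ V' ∧ ρ (σ i) (z i) ∈ W'} ⊆
      σ ⁻¹' {g : G | (((fun t : T × T × T => (ρ g t.1, ρ g t.2.1, ρ g t.2.2)) '' K) ∩
        K).Nonempty} := by
    rintro i ⟨hxi, hyi, hzi, hxi', hyi', hzi'⟩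
    exact ⟨(ρ (σ i) (x i), ρ (σ i) (y i), ρ (σ i) (z i)),
      ⟨(x i, y i, z i), Or.inl ⟨hxi, hyi, hzi⟩, rfl⟩, Or.inr ⟨hxi', hyi', hzi'⟩⟩
  refine hUfin _ ((hfin.preimage (hσ.injOn)).subset hsub) ?_
  exact Ultrafilter.mem_coe.1 (Filter.eventually_iff.1 hmem)

lemma lam_subsingleton {I : Type*} (𝒰 : Ultrafilter I)
    (hUfin : ∀ s : Set I, s.Finite → s ∉ 𝒰)
    (ρ : G → T ≃ₜ T) (hρ : IsTopAction G T ρ)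
    (h3d : ThreeDisc fun (g : G) (x : T) => ρ g x) (h3 : HasThreePts T)
    (σ : I → G) (hσ : Function.Injective σ)
    (lam : T → T) (hlam : ∀ t, Tendsto (fun i => ρ (σ i) t) ↑𝒰 (nhds (lam t))) :
    ∃ r : T, {t : T | lam t ≠ r}.Subsingleton := by
  have two_val : ∀ p q w : T, lam p = lam q ∨ lam p = lam w ∨ lam q = lam w := by
    intro p q w
    by_contra hcon
    push_neg at hcon
    obtain ⟨hpq, hpw, hqw⟩ := hcon
    have dpq : p ≠ q := fun h => hpq (h ▸ rfl)
    have dpw : p ≠ w := fun h => hpw (h ▸ rfl)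
    have dqw : q ≠ w := fun h => hqw (h ▸ rfl)
    exact three_disc_contra 𝒰 hUfin ρ h3d σ hσ (fun _ => p) (fun _ => q) (fun _ => w)
      p q w (lam p) (lam q) (lam w) tendsto_const_nhds tendsto_const_nhds
      tendsto_const_nhds (hlam p) (hlam q) (hlam w) dpq dpw dqw hpq hpw hqw
  have h3' := h3
  obtain ⟨p₁, p₂, p₃, h12, h13, h23⟩ := h3'
  -- two of the three have equal lam value
  obtain ⟨x₁, x₂, hx12, hxl⟩ :
      ∃ x₁ x₂ : T, x₁ ≠ x₂ ∧ lam x₁ = lam x₂ := by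
    rcases two_val p₁ p₂ p₃ with h | h | h
    · exact ⟨p₁, p₂, h12, h⟩
    · exact ⟨p₁, p₃, h13, h⟩
    · exact ⟨p₂, p₃, h23, h⟩
  set r := lam x₁ with hr
  refine ⟨r, fun y₁ hy₁ y₂ hy₂ => ?_⟩
  by_contra hne
  -- lam y₁ = lam y₂
  have hyy : lam y₁ = lam y₂ := by
    rcases two_val x₁ y₁ y₂ with h | h | h
    · exact absurd h.symm hy₁
    · exact absurd h.symm hy₂
    · exact h
  -- also lam x₂ = r
  have hy₁r : lam y₁ ≠ r := hy₁
  -- choose u distinct from r and lam y₁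
  obtain ⟨u, hur, hur₂⟩ := exists_third h3 r (lam y₁)
  obtain ⟨m, hm⟩ := exists_ulim 𝒰 (fun i => ρ (σ i)⁻¹ u)
  -- choose x ∈ {x₁, x₂} with x ≠ m, y ∈ {y₁, y₂} with y ≠ m
  obtain ⟨x, hxm, hxlam⟩ : ∃ x : T, x ≠ m ∧ lam x = r := by
    rcases eq_or_ne x₁ m with h | h
    · exact ⟨x₂, fun h2 => hx12 (h.trans h2.symm), hxl.symm⟩
    · exact ⟨x₁, h, rfl⟩
  obtain ⟨y, hym, hylam⟩ : ∃ y : T, y ≠ m ∧ lam y = lam y₁ := by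
    rcases eq_or_ne y₁ m with h | h
    · exact ⟨y₂, fun h2 => hne (h.trans h2.symm), hyy.symm⟩
    · exact ⟨y₁, h, rfl⟩
  have hxy : x ≠ y := fun h => hy₁r (by rw [← hylam, ← h, hxlam])
  have himg : Tendsto (fun i => ρ (σ i) (ρ (σ i)⁻¹ u)) ↑𝒰 (nhds u) :=
    tendsto_const_nhds.congr fun i => (act_apply_inv_apply hρ (σ i) u).symm
  refine three_disc_contra 𝒰 hUfin ρ h3d σ hσ (fun _ => x) (fun _ => y)
    (fun i => ρ (σ i)⁻¹ u) x y m r (lam y₁) u tendsto_const_nhds tendsto_const_nhds hm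
    (by rw [← hxlam] at *; exact hlam x) (by rw [← hylam] at *; exact hlam y) himg
    hxy hxm hym (fun h => hy₁r h.symm) (fun h => hur h.symm) (fun h => hur₂ h.symm)

end Reverse

end RHG
namespace RHG

open Filter Set

variable {T : Type*} [TopologicalSpace T] {G : Type*} [Group G]
variable [CompactSpace T] [T2Space T]

lemma dynkin (h3 : HasThreePts T) (ρ : G → T ≃ₜ T) (hρ : IsTopAction G T ρ)
    (h3d : ThreeDisc fun (g : G) (x : T) => ρ g x) (a b : Entourage T) :
    {g : G | EntLinked a (entMap (ρ g) b)}.Finite := by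
  by_contra hinf
  replace hinf : {g : G | EntLinked a (entMap (ρ g) b)}.Infinite := hinf
  rcases finite_or_infinite T with hT | hT
  · -- T finite: G is finite
    obtain ⟨p, q, w, hpq, hpw, hqw⟩ := h3
    have hK3 : (distinct3 : Set (T × T × T)) ⊆ distinct3 := le_refl _
    have hfin := h3d distinct3 (Set.toFinite _).isCompact hK3
    have huniv : (Set.univ : Set G) ⊆ {g : G |
        (((fun t : T × T × T => (ρ g t.1, ρ g t.2.1, ρ g t.2.2)) '' distinct3) ∩
          distinct3).Nonempty} := by
      intro g _
      refine ⟨(ρ g p, ρ g q, ρ g w), ⟨(p, q, w), ⟨hpq, hpw, hqw⟩, rfl⟩,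
        ⟨(ρ g).injective.ne hpq, (ρ g).injective.ne hpw, (ρ g).injective.ne hqw⟩⟩
    exact hinf ((hfin.subset huniv).subset (Set.subset_univ _))
  · -- T infinite
    set H := {g : G | EntLinked a (entMap (ρ g) b)} with hH
    haveI : Infinite ↥H := hinf.to_subtype
    set 𝒰 : Ultrafilter ↥H := Filter.hyperfilter ↥H with h𝒰
    have hUfin : ∀ s : Set ↥H, s.Finite → s ∉ 𝒰 := fun s hs =>
      Filter.notMem_hyperfilter_of_finite hs
    choose lam hlam using fun t : T => exists_ulim 𝒰 (fun i : ↥H => ρ (↑i : G) t)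
    choose mu hmu using fun t : T => exists_ulim 𝒰 (fun i : ↥H => ρ ((↑i : G)⁻¹) t)
    obtain ⟨r, hr⟩ := lam_subsingleton 𝒰 hUfin ρ hρ h3d h3 (fun i : ↥H => (↑i : G))
      Subtype.coe_injective lam hlam
    obtain ⟨s, hs⟩ := lam_subsingleton 𝒰 hUfin ρ hρ h3d h3 (fun i : ↥H => (↑i : G)⁻¹)
      (fun i j hij => Subtype.coe_injective (inv_injective hij)) mu hmu
    obtain ⟨V, hVo, hrV, hVsm⟩ := exists_small_nhd a r
    obtain ⟨W, hWo, hsW, hWsm⟩ := exists_small_nhd b s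
    by_cases hcase : ∃ g : ↥H, ∀ t : T, t ∉ W → ρ (↑g : G) t ∈ V
    · obtain ⟨g, hg⟩ := hcase
      refine g.2 ⟨V, (fun t => ρ (↑g : G) t) '' W, hVsm, ?_, ?_⟩
      · exact eSmall_entMap_image hWsm
      · rw [Set.eq_univ_iff_forall]
        intro t
        by_cases hw : (ρ (↑g : G)).symm t ∈ W
        · exact Or.inr ⟨(ρ (↑g : G)).symm t, hw, (ρ (↑g : G)).apply_symm_apply t⟩
        · have := hg _ hw
          rw [(ρ (↑g : G)).apply_symm_apply t] at this
          exact Or.inl this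
    · push_neg at hcase
      choose zf hz1 hz2 using hcase
      obtain ⟨ζ, hζ⟩ := exists_ulim 𝒰 zf
      obtain ⟨ω, hω⟩ := exists_ulim 𝒰 (fun i => ρ (↑i : G) (zf i))
      have hζW : ζ ∈ Wᶜ :=
        hWo.isClosed_compl.mem_of_tendsto hζ (Filter.Eventually.of_forall hz1)
      have hωV : ω ∈ Vᶜ :=
        hVo.isClosed_compl.mem_of_tendsto hω (Filter.Eventually.of_forall hz2)
      have hζs : ζ ≠ s := fun h => hζW (h ▸ hsW)
      have hωr : ω ≠ r := fun h => hωV (h ▸ hrV)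
      -- pick u with mu u = s, u ∉ {r, ω}
      have hfin1 : ({r, ω} ∪ {t : T | mu t ≠ s}).Finite :=
        ((Set.finite_singleton ω).insert r).union hs.finite
      obtain ⟨u, hu⟩ := hfin1.infinite_compl.nonempty
      simp only [Set.mem_compl_iff, Set.mem_union, Set.mem_insert_iff,
        Set.mem_singleton_iff, Set.mem_setOf_eq, not_or, not_not] at hu
      obtain ⟨⟨hur, huω⟩, hus⟩ := hu
      -- pick p with lam p = r, p ∉ {ζ, s}
      have hfin2 : ({ζ, s} ∪ {t : T | lam t ≠ r}).Finite :=
        ((Set.finite_singleton s).insert ζ).union hr.finite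
      obtain ⟨p, hp⟩ := hfin2.infinite_compl.nonempty
      simp only [Set.mem_compl_iff, Set.mem_union, Set.mem_insert_iff,
        Set.mem_singleton_iff, Set.mem_setOf_eq, not_or, not_not] at hp
      obtain ⟨⟨hpζ, hps⟩, hpr⟩ := hp
      have himg : Tendsto (fun i : ↥H => ρ (↑i : G) (ρ ((↑i : G)⁻¹) u)) ↑𝒰 (nhds u) :=
        tendsto_const_nhds.congr fun i => (act_apply_inv_apply hρ (↑i : G) u).symm
      have hmus : Tendsto (fun i : ↥H => ρ ((↑i : G)⁻¹) u) ↑𝒰 (nhds s) := by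
        rw [← hus]; exact hmu u
      have hlamp : Tendsto (fun i : ↥H => ρ (↑i : G) p) ↑𝒰 (nhds r) := by
        rw [← hpr]; exact hlam p
      exact three_disc_contra 𝒰 hUfin ρ h3d (fun i : ↥H => (↑i : G)) Subtype.coe_injective
        (fun _ => p) zf (fun i => ρ ((↑i : G)⁻¹) u) p ζ s r ω u
        tendsto_const_nhds hζ hmus hlamp hω himg
        hpζ hps hζs hωr.symm (fun h => hur h.symm) (fun h => huω h.symm)

lemma reverse_dir (h3 : HasThreePts T) (ρ : G → T ≃ₜ T) (hρ : IsTopAction G T ρ)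
    (h3d : ThreeDisc fun (g : G) (x : T) => ρ g x)
    (hRHS : ∃ A : Set (Entourage T), A.Nonempty ∧
      (∀ a ∈ A, GoodEnt a) ∧
      (∀ g : G, ∀ a ∈ A, entMap (ρ g) a ∈ A) ∧
      (∃ F : Set (Entourage T), F.Finite ∧ F ⊆ A ∧
        ∀ a ∈ A, ∃ g : G, ∃ b ∈ F, a = entMap (ρ g) b) ∧
      (∀ a ∈ A, ∀ b ∈ A, ∃ n : ℕ, AdistLE A n a b)) :
    Group.FG G := by
  obtain ⟨A, ⟨a₀, ha₀⟩, hgood, hinv, ⟨F, hFfin, hFA, hForb⟩, hconn⟩ := hRHS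
  set S : Set G := {g : G | ∃ f ∈ F, ∃ f' ∈ F, EntLinked f (entMap (ρ g) f')} with hS
  have hSfin : S.Finite := by
    have hsub : S ⊆ ⋃ f ∈ F, ⋃ f' ∈ F, {g : G | EntLinked f (entMap (ρ g) f')} := by
      rintro g ⟨f, hf, f', hf', hl⟩
      exact Set.mem_biUnion hf (Set.mem_biUnion hf' hl)
    exact (Set.Finite.biUnion hFfin fun f _ =>
      Set.Finite.biUnion hFfin fun f' _ => dynkin h3 ρ hρ h3d f f').subset hsub
  rw [Group.fg_iff]
  refine ⟨S, ?_, hSfin⟩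
  rw [eq_top_iff]
  rintro g -
  obtain ⟨g₀, f₀, hf₀F, -⟩ := hForb a₀ ha₀
  have hf₀A : f₀ ∈ A := hFA hf₀F
  have hgf₀ : entMap (ρ g) f₀ ∈ A := hinv g _ hf₀A
  obtain ⟨n, c, hc0, hcn, hcmem, hcl⟩ := hconn f₀ hf₀A _ hgf₀
  have key : ∀ i, i ≤ n → ∃ h ∈ Subgroup.closure S, ∃ f ∈ F, c i = entMap (ρ h) f := by
    intro i
    induction i with
    | zero =>
      intro _
      exact ⟨1, one_mem _, f₀, hf₀F, by rw [hc0, entMap_one hρ]⟩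
    | succ k ih =>
      intro hk
      obtain ⟨h, hmem, f, hfF, hcf⟩ := ih (by omega)
      obtain ⟨g', f', hf'F, hcf'⟩ := hForb (c (k + 1)) (hcmem (k + 1) hk)
      have hl := hcl k (by omega)
      rw [hcf, hcf'] at hl
      have he : entMap (ρ g') f' = entMap (ρ h) (entMap (ρ (h⁻¹ * g')) f') := by
        rw [entMap_mul hρ, mul_inv_cancel_left]
      rw [he] at hl
      have hlS : h⁻¹ * g' ∈ S := ⟨f, hfF, f', hf'F, entLinked_entMap_iff.1 hl⟩
      refine ⟨g', ?_, f', hf'F, hcf'⟩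
      have : g' = h * (h⁻¹ * g') := (mul_inv_cancel_left h g').symm
      rw [this]
      exact mul_mem hmem (Subgroup.subset_closure hlS)
  obtain ⟨h, hmem, f, hfF, hcf⟩ := key n le_rfl
  rw [hcn] at hcf
  have hfe : entMap (ρ (h⁻¹ * g)) f₀ = f := by
    have := congrArg (entMap (ρ h⁻¹)) hcf
    rw [entMap_mul hρ, entMap_mul hρ, inv_mul_cancel, entMap_one hρ] at this
    exact this
  have hlS : h⁻¹ * g ∈ S := by
    refine ⟨f, hfF, f₀, hf₀F, ?_⟩
    rw [hfe]
    exact (hgood f (hFA hfF)).1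
  have hg : g = h * (h⁻¹ * g) := (mul_inv_cancel_left h g).symm
  rw [hg]
  exact mul_mem hmem (Subgroup.subset_closure hlS)

end RHG

namespace RHG

/-- Let `G` act 3-discontinuously and 2-cocompactly on a compactum `T`. Then `G` is
finitely generated if and only if there exists a nonempty `G`-finite (`G`-invariant) set
`A` of entourages of `T` whose graph of entourages `Γ_A` is connected. -/
theorem finitely_generated_iff_connected_entourage_graph {G : Type*} [Group G]
    {T : Type*} [TopologicalSpace T] [CompactSpace T] [T2Space T] (h3 : HasThreePts T)
    (ρ : G → T ≃ₜ T) (hρ : IsTopAction G T ρ)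
    (h3d : ThreeDisc fun (g : G) (x : T) => ρ g x)
    (h2c : TwoCocompact fun (g : G) (x : T) => ρ g x) :
    Group.FG G ↔
      ∃ A : Set (Entourage T), A.Nonempty ∧
        (∀ a ∈ A, GoodEnt a) ∧
        (∀ g : G, ∀ a ∈ A, entMap (ρ g) a ∈ A) ∧
        (∃ F : Set (Entourage T), F.Finite ∧ F ⊆ A ∧
          ∀ a ∈ A, ∃ g : G, ∃ b ∈ F, a = entMap (ρ g) b) ∧
        (∀ a ∈ A, ∀ b ∈ A, ∃ n : ℕ, AdistLE A n a b) := by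
  constructor
  · intro hFG
    exact forward_dir h3 ρ hρ hFG
  · intro hRHS
    exact reverse_dir h3 ρ hρ h3d hRHS

end RHG
end

section
/- Let T be a compactum and A a discrete G-finite set of entourages of T. Then the space T̃ = T ⊔ A, equipped with the topology generated by the singletons {e} for e ∈ A together with the convex hulls õ = o ∪ {e ∈ A : the complement of o is e-small} of open subsets o ⊆ T, is a compactum (i.e., compact and Hausdorff). -/
namespace RHG

section Aux

variable {T : Type*} [TopologicalSpace T]

lemma eSmall_mono {e : Entourage T} {s t : Set T} (h : s ⊆ t) (ht : eSmall e t) :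
    eSmall e s := fun x hx y hy => ht x (h hx) y (h hy)

/-- The convex hull of an open set, as a subset of `T ⊕ ↥A`. -/
def hullSet (A : Set (Entourage T)) (o : Set T) : Set (T ⊕ ↥A) :=
  Sum.inl '' o ∪ Sum.inr '' {e : ↥A | eSmall (↑e) oᶜ}

lemma isOpen_hullSet (A : Set (Entourage T)) {o : Set T} (ho : IsOpen o) :
    @IsOpen _ (tildeTop A) (hullSet A o) :=
  TopologicalSpace.isOpen_generateFrom_of_mem (Or.inr ⟨o, ho, rfl⟩)

lemma isOpen_inr_singleton (A : Set (Entourage T)) (e : ↥A) :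
    @IsOpen _ (tildeTop A) ({Sum.inr e} : Set (T ⊕ ↥A)) :=
  TopologicalSpace.isOpen_generateFrom_of_mem (Or.inl ⟨e, rfl⟩)

lemma inl_mem_hullSet {A : Set (Entourage T)} {o : Set T} {p : T} (hp : p ∈ o) :
    Sum.inl p ∈ hullSet A o := Or.inl ⟨p, hp, rfl⟩

lemma inr_mem_hullSet {A : Set (Entourage T)} {o : Set T} {e : ↥A}
    (he : eSmall (↑e) oᶜ) : Sum.inr e ∈ hullSet A o := Or.inr ⟨e, he, rfl⟩

lemma mem_hullSet_inl {A : Set (Entourage T)} {o : Set T} {p : T}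
    (h : Sum.inl p ∈ hullSet A o) : p ∈ o := by
  rcases h with ⟨q, hq, hq'⟩ | ⟨f, _, hf'⟩
  · cases hq'; exact hq
  · exact absurd hf' (by simp)

lemma mem_hullSet_inr {A : Set (Entourage T)} {o : Set T} {e : ↥A}
    (h : Sum.inr e ∈ hullSet A o) : eSmall (↑e) oᶜ := by
  rcases h with ⟨q, _, hq'⟩ | ⟨f, hf, hf'⟩
  · exact absurd hq' (by simp)
  · cases Sum.inr_injective hf' ; exact hf

lemma hullSet_inter_subset {A : Set (Entourage T)} (o₁ o₂ : Set T) :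
    hullSet A (o₁ ∩ o₂) ⊆ hullSet A o₁ ∩ hullSet A o₂ := by
  rintro x (⟨p, hp, rfl⟩ | ⟨e, he, rfl⟩)
  · exact ⟨inl_mem_hullSet hp.1, inl_mem_hullSet hp.2⟩
  · refine ⟨inr_mem_hullSet (eSmall_mono ?_ he), inr_mem_hullSet (eSmall_mono ?_ he)⟩
    · exact Set.compl_subset_compl.2 Set.inter_subset_left
    · exact Set.compl_subset_compl.2 Set.inter_subset_right

/-- Every `tildeTop`-open set containing `inl p` contains a hull of an open
neighborhood of `p`. -/
lemma exists_hullSet_subset {A : Set (Entourage T)} {U : Set (T ⊕ ↥A)}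
    (hU : @IsOpen _ (tildeTop A) U) :
    ∀ p : T, Sum.inl p ∈ U → ∃ o : Set T, IsOpen o ∧ p ∈ o ∧ hullSet A o ⊆ U := by
  have hU' : TopologicalSpace.GenerateOpen
      ({s | ∃ e : ↥A, s = {Sum.inr e}} ∪
        {s | ∃ o : Set T, IsOpen o ∧
          s = Sum.inl '' o ∪ Sum.inr '' {e : ↥A | eSmall (↑e) oᶜ}}) U := hU
  clear hU
  induction hU' with
  | basic s hs =>
    rcases hs with ⟨e, rfl⟩ | ⟨o, ho, rfl⟩
    · intro p hp; exact absurd hp (by simp)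
    · intro p hp
      exact ⟨o, ho, mem_hullSet_inl hp, le_refl _⟩
  | univ => intro p _; exact ⟨Set.univ, isOpen_univ, trivial, Set.subset_univ _⟩
  | inter s t _ _ ihs iht =>
    intro p hp
    obtain ⟨o₁, ho₁, hp₁, hs₁⟩ := ihs p hp.1
    obtain ⟨o₂, ho₂, hp₂, hs₂⟩ := iht p hp.2
    exact ⟨o₁ ∩ o₂, ho₁.inter ho₂, ⟨hp₁, hp₂⟩,
      (hullSet_inter_subset o₁ o₂).trans (Set.inter_subset_inter hs₁ hs₂)⟩
  | sUnion S _ ih =>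
    intro p hp
    obtain ⟨s, hsS, hps⟩ := hp
    obtain ⟨o, ho, hpo, hso⟩ := ih s hsS p hps
    exact ⟨o, ho, hpo, hso.trans (Set.subset_sUnion_of_mem hsS)⟩

/-- Lebesgue-number-type lemma: given an open cover of a compact Hausdorff space,
there is an entourage such that every small set lies in one member of the cover. -/
lemma lebesgue_ent {T : Type*} [TopologicalSpace T] [CompactSpace T] [T2Space T]
    {ι : Type*} [Nonempty ι] (o : ι → Set T) (ho : ∀ i, IsOpen (o i))
    (hc : Set.univ ⊆ ⋃ i, o i) :
    ∃ w : Entourage T, ∀ s : Set T, eSmall w s → ∃ i, s ⊆ o i := by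
  letI us : UniformSpace T := uniformSpaceOfCompactR1
  obtain ⟨V, hV, hball⟩ := lebesgue_number_lemma isCompact_univ ho hc
  have hVswap : Prod.swap ⁻¹' V ∈ uniformity T := by
    have := tendsto_swap_uniformity (α := T) hV
    rwa [Filter.mem_map] at this
  refine ⟨⟨V ∩ Prod.swap ⁻¹' V, fun x y h => ⟨h.2, h.1⟩, fun x =>
    Filter.inter_mem (nhds_le_uniformity x hV)
      (nhds_le_uniformity x hVswap)⟩, ?_⟩
  intro s hs
  rcases s.eq_empty_or_nonempty with rfl | ⟨x, hx⟩
  · exact ⟨Classical.arbitrary ι, Set.empty_subset _⟩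
  · obtain ⟨i, hi⟩ := hball x trivial
    exact ⟨i, fun y hy => hi (hs x hx y hy).1⟩

/-- Around every point there is an open set whose complement is not `e`-small,
provided `e` is self-linked. -/
lemma exists_open_not_small {T : Type*} [TopologicalSpace T] [T2Space T]
    {e : Entourage T} (he : EntLinked e e) (p : T) :
    ∃ o : Set T, IsOpen o ∧ p ∈ o ∧ ¬ eSmall e oᶜ := by
  by_cases h : ∃ x z : T, x ≠ p ∧ z ≠ p ∧ (x, z) ∉ e.carrier
  · obtain ⟨x, z, hx, hz, hxz⟩ := h
    refine ⟨({x} ∪ {z})ᶜ, (isClosed_singleton.union isClosed_singleton).isOpen_compl,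
      by simp [hx.symm, hz.symm], ?_⟩
    intro hsm
    exact hxz (hsm x (by simp) z (by simp))
  · push_neg at h
    refine absurd ?_ he
    refine ⟨{p}, {p}ᶜ, ?_, fun x hx y hy => h x y hx hy, by simp⟩
    intro x hx y hy
    simp only [Set.mem_singleton_iff] at hx hy
    rw [hx, hy]
    exact mem_of_mem_nhds (e.mem_nhds' p)

end Aux

end RHG

namespace RHG

/-- Let `T` be a compactum and `A` a discrete `G`-finite set of entourages of `T`. Then
`T̃ = T ⊔ A`, with the topology generated by the singletons of elements of `A` and the
convex hulls of open subsets of `T`, is a compactum (compact and Hausdorff). -/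
theorem tilde_is_compactum {G : Type*} [Group G]
    {T : Type*} [TopologicalSpace T] [CompactSpace T] [T2Space T] (h3 : HasThreePts T)
    (ρ : G → T ≃ₜ T) (hρ : IsTopAction G T ρ)
    (A : Set (Entourage T))
    (hgood : ∀ a ∈ A, GoodEnt a)
    (hdisc : DiscreteEnts A)
    (hinv : ∀ g : G, ∀ a ∈ A, entMap (ρ g) a ∈ A)
    (hGfin : ∃ F : Set (Entourage T), F.Finite ∧ F ⊆ A ∧
      ∀ a ∈ A, ∃ g : G, ∃ b ∈ F, a = entMap (ρ g) b) :
    @CompactSpace (T ⊕ ↥A) (tildeTop A) ∧ @T2Space (T ⊕ ↥A) (tildeTop A) := by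
  letI : TopologicalSpace (T ⊕ ↥A) := tildeTop A
  constructor
  · -- compactness
    refine ⟨isCompact_of_finite_subcover ?_⟩
    intro ι U hUo hcov
    classical
    -- choose for each point of `T` a hull neighborhood inside some `U i`
    have hpt : ∀ p : T, ∃ (i : ι) (o : Set T), IsOpen o ∧ p ∈ o ∧ hullSet A o ⊆ U i := by
      intro p
      obtain ⟨i, hi⟩ := Set.mem_iUnion.1 (hcov (Set.mem_univ (Sum.inl p)))
      obtain ⟨o, ho, hpo, hos⟩ := exists_hullSet_subset (hUo i) p hi
      exact ⟨i, o, ho, hpo, hos⟩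
    choose idx op hop hpop hsub using hpt
    -- choose for each entourage in `A` an index covering it
    have hent : ∀ e : ↥A, ∃ i : ι, Sum.inr e ∈ U i := fun e =>
      Set.mem_iUnion.1 (hcov (Set.mem_univ (Sum.inr e)))
    choose jdx hjdx using hent
    -- finite subcover of `T`
    obtain ⟨P, hP⟩ := isCompact_univ.elim_finite_subcover op hop
      (fun p _ => Set.mem_iUnion.2 ⟨p, hpop p⟩)
    -- `P` is nonempty since `T` is
    obtain ⟨x₀, -, -, -, -, -⟩ := h3
    have hPne : ∃ p, p ∈ P := by
      obtain ⟨p, hpP, -⟩ := Set.mem_iUnion₂.1 (hP (Set.mem_univ x₀))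
      exact ⟨p, hpP⟩
    haveI : Nonempty ↥(P : Set T) := hPne.elim fun p hp => ⟨⟨p, hp⟩⟩
    -- Lebesgue entourage for this cover
    obtain ⟨w, hw⟩ := lebesgue_ent (fun q : ↥(P : Set T) => op ↑q)
      (fun q => hop ↑q) (by
        intro x _
        obtain ⟨p, hpP, hx⟩ := Set.mem_iUnion₂.1 (hP (Set.mem_univ x))
        exact Set.mem_iUnion.2 ⟨⟨p, hpP⟩, hx⟩)
    -- the set of entourages of `A` linked with `w` is finite
    have hBfin : Set.Finite {a ∈ A | EntLinked a w} := hdisc w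
    have hB'fin : Set.Finite {e : ↥A | EntLinked (↑e) w} := by
      have : Set.Finite (Subtype.val ⁻¹' {a ∈ A | EntLinked a w} : Set ↥A) :=
        Set.Finite.preimage (Set.injOn_of_injective Subtype.val_injective) hBfin
      refine this.subset ?_
      intro e he
      exact ⟨e.2, he⟩
    -- the finite subcover
    refine ⟨P.image idx ∪ (hB'fin.image jdx).toFinset, ?_⟩
    rintro (q | e) -
    · obtain ⟨p, hpP, hq⟩ := Set.mem_iUnion₂.1 (hP (Set.mem_univ q))
      refine Set.mem_iUnion₂.2 ⟨idx p, ?_, hsub p (inl_mem_hullSet hq)⟩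
      exact Finset.mem_union_left _ (Finset.mem_image_of_mem idx hpP)
    · by_cases hlink : EntLinked (↑e) w
      · refine Set.mem_iUnion₂.2 ⟨jdx e, ?_, hjdx e⟩
        refine Finset.mem_union_right _ ?_
        rw [Set.Finite.mem_toFinset]
        exact ⟨e, hlink, rfl⟩
      · have hunl : EntUnlinked (↑e) w := not_not.1 hlink
        obtain ⟨sa, sb, hsa, hsb, hunion⟩ := hunl
        obtain ⟨q, hq⟩ := hw sb hsb
        have hcompl : eSmall (↑e) (op ↑q)ᶜ := by
          refine eSmall_mono ?_ hsa
          intro x hx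
          rcases (hunion.symm ▸ Set.mem_univ x : x ∈ sa ∪ sb) with h | h
          · exact h
          · exact absurd (hq h) hx
        refine Set.mem_iUnion₂.2 ⟨idx ↑q, ?_, hsub ↑q (inr_mem_hullSet hcompl)⟩
        exact Finset.mem_union_left _ (Finset.mem_image_of_mem idx q.2)
  · -- Hausdorff
    refine ⟨fun {x y} hxy => ?_⟩
    match x, y with
    | Sum.inl p, Sum.inl q =>
      have hpq : p ≠ q := fun h => hxy (by rw [h])
      obtain ⟨u, v, hu, hv, hpu, hqv, huv⟩ := t2_separation hpq
      refine ⟨hullSet A u, hullSet A v, isOpen_hullSet A hu, isOpen_hullSet A hv,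
        inl_mem_hullSet hpu, inl_mem_hullSet hqv, ?_⟩
      rw [Set.disjoint_left]
      rintro (t | e) ht ht'
      · exact Set.disjoint_left.1 huv (mem_hullSet_inl ht) (mem_hullSet_inl ht')
      · refine (hgood ↑e e.2).1 ⟨uᶜ, vᶜ, mem_hullSet_inr ht, mem_hullSet_inr ht', ?_⟩
        rw [← Set.compl_inter, Set.disjoint_iff_inter_eq_empty.1 huv, Set.compl_empty]
    | Sum.inl p, Sum.inr e =>
      obtain ⟨o, ho, hpo, hno⟩ := exists_open_not_small (hgood ↑e e.2).1 p
      refine ⟨hullSet A o, {Sum.inr e}, isOpen_hullSet A ho, isOpen_inr_singleton A e,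
        inl_mem_hullSet hpo, rfl, ?_⟩
      rw [Set.disjoint_left]
      rintro z hz rfl
      exact hno (mem_hullSet_inr hz)
    | Sum.inr e, Sum.inl p =>
      obtain ⟨o, ho, hpo, hno⟩ := exists_open_not_small (hgood ↑e e.2).1 p
      refine ⟨{Sum.inr e}, hullSet A o, isOpen_inr_singleton A e, isOpen_hullSet A ho,
        rfl, inl_mem_hullSet hpo, ?_⟩
      rw [Set.disjoint_right]
      rintro z hz rfl
      exact hno (mem_hullSet_inr hz)
    | Sum.inr e, Sum.inr f =>
      refine ⟨{Sum.inr e}, {Sum.inr f}, isOpen_inr_singleton A e, isOpen_inr_singleton A f,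
        rfl, rfl, ?_⟩
      simp only [Set.disjoint_singleton]
      exact hxy

end RHG
end
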